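/- arXiv:2510.11609 — 2 statements merged into one kernel-verified Lean document; each statement's English description precedes it below -/
import Mathlib

section
/- For a design D consisting of N distinct points of {-1,1}^m (an injective function from Fin N to {-1,1}^m), the quantity \sum_{s=1}^m b_s(D), where b_s(D) = (1/N^2) \sum_{|g|=s} J_g(D)^2 and J_g(D) = \sum_{h=1}^N \prod_{i \in g} D(h)_i, depends only on m and N and not on the choice of D. Explicitly, \sum_{s=1}^m b_s(D) = (N(2^m - N))/N^2 = (2^m - N)/N. -/
/-- J-characteristic of a two-level design for a word `g`. -/
def Jchar {N m : ℕ} (D : Fin N → Fin m → ℤ) (g : Finset (Fin m)) : ℤ :=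
  ∑ h, ∏ i ∈ g, D h i

/-- Generalized word count `b_s`. -/
def gwc {N m : ℕ} (D : Fin N → Fin m → ℤ) (s : ℕ) : ℚ :=
  (∑ g ∈ Finset.univ.powerset.filter (fun g : Finset (Fin m) => g.card = s),
    ((Jchar D g : ℤ) : ℚ) ^ 2) / (N : ℚ) ^ 2

lemma total_Jsq {N m : ℕ} (D : Fin N → Fin m → ℤ)
    (hD : ∀ h i, D h i = 1 ∨ D h i = -1) (hinj : Function.Injective D) :
    ∑ g ∈ Finset.univ.powerset, (Jchar D g) ^ 2 = (N : ℤ) * 2 ^ m := by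
  have key : ∀ h h' : Fin N, (∏ i, (D h i * D h' i + 1))
      = if h = h' then (2 : ℤ) ^ m else 0 := by
    intro h h'
    split
    · next heq =>
      subst heq
      rw [show ((2:ℤ)^m) = ∏ _i : Fin m, (2:ℤ) by simp]
      apply Finset.prod_congr rfl
      intro i _
      rcases hD h i with h1 | h1 <;> rw [h1] <;> ring
    · next hne =>
      have : D h ≠ D h' := fun e => hne (hinj e)
      obtain ⟨i, hi⟩ := Function.ne_iff.mp this
      apply Finset.prod_eq_zero (Finset.mem_univ i)
      rcases hD h i with h1 | h1 <;> rcases hD h' i with h2 | h2 <;>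
        simp [h1, h2] at hi ⊢
  calc ∑ g ∈ Finset.univ.powerset, (Jchar D g) ^ 2
      = ∑ g ∈ Finset.univ.powerset, ∑ h, ∑ h', (∏ i ∈ g, D h i) * ∏ i ∈ g, D h' i := by
        apply Finset.sum_congr rfl
        intro g _
        rw [Jchar, sq, Finset.sum_mul_sum]
    _ = ∑ h, ∑ h', ∑ g ∈ Finset.univ.powerset, ∏ i ∈ g, (D h i * D h' i) := by
        rw [Finset.sum_comm]
        apply Finset.sum_congr rfl
        intro h _
        rw [Finset.sum_comm]
        apply Finset.sum_congr rfl
        intro h' _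
        apply Finset.sum_congr rfl
        intro g _
        rw [Finset.prod_mul_distrib]
    _ = ∑ h, ∑ h' : Fin N, ∏ i, (D h i * D h' i + 1) := by
        apply Finset.sum_congr rfl
        intro h _
        apply Finset.sum_congr rfl
        intro h' _
        rw [Finset.prod_add]
        apply Finset.sum_congr rfl
        intro g _
        simp
    _ = ∑ h : Fin N, (2:ℤ) ^ m := by
        apply Finset.sum_congr rfl
        intro h _
        simp [key]
    _ = (N : ℤ) * 2 ^ m := by simp [mul_comm]

/-- For an unreplicated (injective) two-level design, the total generalized
word count is the constant `(2^m - N)/N`. -/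
theorem sum_gwc_injective (m N : ℕ) (hN : 0 < N)
    (D : Fin N → Fin m → ℤ) (hD : ∀ h i, D h i = 1 ∨ D h i = -1)
    (hinj : Function.Injective D) :
    ∑ s ∈ Finset.Icc 1 m, gwc D s = ((2 ^ m : ℚ) - N) / N := by
  have hN' : (N : ℚ) ≠ 0 := Nat.cast_ne_zero.mpr hN.ne'
  have hfib : ∑ s ∈ Finset.range (m+1),
      ∑ g ∈ Finset.univ.powerset.filter (fun g : Finset (Fin m) => g.card = s),
        ((Jchar D g : ℤ) : ℚ) ^ 2
      = ∑ g ∈ Finset.univ.powerset, ((Jchar D g : ℤ) : ℚ) ^ 2 := by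
    apply Finset.sum_fiberwise_of_maps_to
    intro g _
    have : g.card ≤ m := by
      simpa using Finset.card_le_card (Finset.subset_univ g)
    simp [Finset.mem_range]
    omega
  have hrange : Finset.range (m+1) = insert 0 (Finset.Icc 1 m) := by
    ext x
    simp [Finset.mem_range, Finset.mem_Icc]
    omega
  have h0 : Finset.univ.powerset.filter (fun g : Finset (Fin m) => g.card = 0)
      = {(∅ : Finset (Fin m))} := by
    ext g
    simp [Finset.card_eq_zero]
  have hempty : (Jchar D (∅ : Finset (Fin m)) : ℚ) = N := by
    simp [Jchar]
  have htot := total_Jsq D hD hinj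
  have htotQ : ∑ g ∈ Finset.univ.powerset, ((Jchar D g : ℤ) : ℚ) ^ 2
      = (N : ℚ) * 2 ^ m := by
    have := congrArg (fun z : ℤ => (z : ℚ)) htot
    push_cast at this
    simpa using this
  have hsum : ∑ s ∈ Finset.Icc 1 m, ∑ g ∈ Finset.univ.powerset.filter
        (fun g : Finset (Fin m) => g.card = s), ((Jchar D g : ℤ) : ℚ) ^ 2
      = (N : ℚ) * 2 ^ m - (N : ℚ) ^ 2 := by
    have h01 : (0 : ℕ) ∉ Finset.Icc 1 m := by simp
    rw [hrange, Finset.sum_insert h01, h0] at hfib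
    simp only [Finset.sum_singleton] at hfib
    rw [hempty] at hfib
    rw [htotQ] at hfib
    linarith [hfib]
  unfold gwc
  rw [← Finset.sum_div, hsum]
  field_simp
end

section
/- Let D : Fin N \to {-1,1}^m be an injective design whose image contains the point x^- = (-1,1,...,1) but not the point (1,...,1). Let D' be obtained from D by changing the first coordinate of the row equal to x^- from -1 to +1. Then \sum_{s=1}^m b_s(D') = \sum_{s=1}^m b_s(D). -/
lemma sum_sq_J {N m : ℕ} (D : Fin N → Fin m → ℤ)
    (hD : ∀ h i, D h i = 1 ∨ D h i = -1) (hinj : Function.Injective D) :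
    ∑ g ∈ (Finset.univ : Finset (Fin m)).powerset, (Jchar D g) ^ 2 = N * 2 ^ m := by
  have step1 : ∀ g : Finset (Fin m), (Jchar D g) ^ 2
      = ∑ h : Fin N, ∑ h' : Fin N, ∏ i ∈ g, (D h i * D h' i) := by
    intro g
    simp only [Jchar, sq, Finset.sum_mul_sum, Finset.prod_mul_distrib]
  rw [Finset.sum_congr rfl (fun g _ => step1 g)]
  rw [Finset.sum_comm]
  have : ∀ h : Fin N, ∑ g ∈ (Finset.univ : Finset (Fin m)).powerset,
      ∑ h' : Fin N, ∏ i ∈ g, (D h i * D h' i) = 2 ^ m := by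
    intro h
    rw [Finset.sum_comm]
    have inner : ∀ h' : Fin N, ∑ g ∈ (Finset.univ : Finset (Fin m)).powerset,
        ∏ i ∈ g, (D h i * D h' i) = ∏ i : Fin m, (D h i * D h' i + 1) := by
      intro h'
      rw [Finset.prod_add]
      simp
    rw [Finset.sum_congr rfl (fun h' _ => inner h')]
    have : ∀ h' : Fin N, ∏ i : Fin m, (D h i * D h' i + 1)
        = if h' = h then 2 ^ m else 0 := by
      intro h'
      by_cases hh : h' = h
      · subst hh
        have : ∀ i, D h' i * D h' i + 1 = 2 := by
          intro i; rcases hD h' i with e | e <;> simp [e]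
        simp [this]
      · have hne : D h' ≠ D h := fun e => hh (hinj e)
        have : ∃ i, D h' i ≠ D h i := by
          by_contra hc; push_neg at hc; exact hne (funext hc)
        obtain ⟨i, hi⟩ := this
        have hz : D h i * D h' i + 1 = 0 := by
          rcases hD h i with e | e <;> rcases hD h' i with e' | e' <;>
            simp [e, e'] at hi ⊢
        simp [hh]
        exact Finset.prod_eq_zero (Finset.mem_univ i) hz
    rw [Finset.sum_congr rfl (fun h' _ => this h')]
    simp
  rw [Finset.sum_congr rfl (fun h _ => this h)]
  simp [mul_comm]

lemma sum_gwc_eq {N m : ℕ} (D : Fin N → Fin m → ℤ)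
    (hsq : ∑ g ∈ (Finset.univ : Finset (Fin m)).powerset, (Jchar D g) ^ 2 = N * 2 ^ m) :
    ∑ s ∈ Finset.Icc 1 m, gwc D s
      = (((N : ℚ) * 2 ^ m - (N : ℚ) ^ 2)) / (N : ℚ) ^ 2 := by
  have hfib : ∑ s ∈ Finset.range (m + 1),
      ∑ g ∈ Finset.univ.powerset.filter (fun g : Finset (Fin m) => g.card = s),
        ((Jchar D g : ℤ) : ℚ) ^ 2
      = ∑ g ∈ (Finset.univ : Finset (Fin m)).powerset, ((Jchar D g : ℤ) : ℚ) ^ 2 := by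
    apply Finset.sum_fiberwise_of_maps_to
    intro g hg
    simp only [Finset.mem_range, Nat.lt_succ_iff]
    simpa using Finset.card_le_card (Finset.mem_powerset.mp hg)
  have hrange : Finset.range (m + 1) = insert 0 (Finset.Icc 1 m) := by
    ext x; simp [Finset.mem_range, Finset.mem_Icc]; omega
  have hzero : Finset.univ.powerset.filter (fun g : Finset (Fin m) => g.card = 0)
      = {(∅ : Finset (Fin m))} := by
    ext g; simp [Finset.card_eq_zero]
  have hJempty : Jchar D (∅ : Finset (Fin m)) = N := by simp [Jchar]
  have h1 : ∑ s ∈ Finset.Icc 1 m,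
      ∑ g ∈ Finset.univ.powerset.filter (fun g : Finset (Fin m) => g.card = s),
        ((Jchar D g : ℤ) : ℚ) ^ 2
      = (N : ℚ) * 2 ^ m - (N : ℚ) ^ 2 := by
    have := hfib
    rw [hrange, Finset.sum_insert (by simp)] at this
    rw [hzero, Finset.sum_singleton, hJempty] at this
    have hcast : ∑ g ∈ (Finset.univ : Finset (Fin m)).powerset,
        ((Jchar D g : ℤ) : ℚ) ^ 2 = (N : ℚ) * 2 ^ m := by
      have := congrArg (fun z : ℤ => (z : ℚ)) hsq
      push_cast at this
      exact this
    rw [hcast] at this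
    push_cast at this ⊢
    linarith
  simp only [gwc, ← Finset.sum_div, h1]

/-- If an injective design contains the point `(-1,1,…,1)` but not `(1,…,1)`,
then changing the first coordinate of that row from `-1` to `+1` leaves the
total generalized word count unchanged. -/
theorem sum_gwc_coordinate_exchange (m N : ℕ) (hm : 0 < m)
    (D : Fin N → Fin m → ℤ) (hD : ∀ h i, D h i = 1 ∨ D h i = -1)
    (hinj : Function.Injective D) (h0 : Fin N)
    (hrow : D h0 = fun j => if j = ⟨0, hm⟩ then -1 else 1)
    (hnot : ∀ h, D h ≠ fun _ => 1)
    (D' : Fin N → Fin m → ℤ)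
    (hD' : D' = Function.update D h0 (fun _ => 1)) :
    ∑ s ∈ Finset.Icc 1 m, gwc D' s = ∑ s ∈ Finset.Icc 1 m, gwc D s := by
  have hD'app : ∀ h, D' h = if h = h0 then (fun _ => 1) else D h := by
    intro h; rw [hD', Function.update_apply]
  have hD'pm : ∀ h i, D' h i = 1 ∨ D' h i = -1 := by
    intro h i
    rw [hD'app]
    by_cases hh : h = h0 <;> simp [hh, hD h i]
  have hD'inj : Function.Injective D' := by
    intro a b hab
    rw [hD'app a, hD'app b] at hab
    by_cases ha : a = h0 <;> by_cases hb : b = h0 <;> simp [ha, hb] at hab ⊢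
    · exact absurd hab.symm (hnot b)
    · exact absurd hab (hnot a)
    · exact hinj hab
  rw [sum_gwc_eq D (sum_sq_J D hD hinj), sum_gwc_eq D' (sum_sq_J D' hD'pm hD'inj)]
end
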